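/- Evaluating the uniform product formula Π_{i=1}^{n} (h + e_i + 1)/(e_i + 1) with the Coxeter number h = 2n − 2 and exponents e_i = (1, 3, …, 2n−3, n−1) of type D_n yields C(2n, n) − C(2n−2, n−1). -/

import Mathlib

lemma prod_shift_eq (m : ℕ) :
    (∏ i ∈ Finset.Icc 1 m, ((m : ℚ) + i)) = ∏ i ∈ Finset.Ioc m (2 * m), (i : ℚ) := by
  apply Finset.prod_nbij' (fun i => m + i) (fun j => j - m)
  · intro i hi
    simp only [Finset.mem_Icc] at hi
    simp only [Finset.mem_Ioc]
    omega
  · intro j hj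
    simp only [Finset.mem_Ioc] at hj
    simp only [Finset.mem_Icc]
    omega
  · intro i hi; omega
  · intro j hj
    simp only [Finset.mem_Ioc] at hj
    omega
  · intro i hi
    push_cast
    ring

lemma prod_Ioc_zero_id (k : ℕ) : (∏ i ∈ Finset.Ioc 0 k, i) = k.factorial := by
  induction k with
  | zero => simp
  | succ k ih =>
    rw [Finset.prod_Ioc_succ_top (Nat.zero_le _), ih, Nat.factorial_succ, mul_comm]

lemma prod_ratio_eq_centralBinom (m : ℕ) :
    (∏ i ∈ Finset.Icc 1 m, (((m : ℚ) + i) / i)) = (Nat.centralBinom m : ℚ) := by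
  have hle : m ≤ 2 * m := by omega
  rw [Finset.prod_div_distrib, prod_shift_eq]
  have h1 : (∏ i ∈ Finset.Icc 1 m, (i : ℚ)) = (m.factorial : ℚ) := by
    have : (∏ i ∈ Finset.Icc 1 m, i) = m.factorial := by
      rw [show Finset.Icc 1 m = Finset.Ioc 0 m from Finset.Icc_add_one_left_eq_Ioc 0 m]
      exact prod_Ioc_zero_id m
    rw [← Nat.cast_prod]; exact_mod_cast this
  have h2 : (m.factorial : ℚ) * ∏ i ∈ Finset.Ioc m (2 * m), (i : ℚ) = ((2 * m).factorial : ℚ) := by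
    have h := Finset.prod_Ioc_consecutive (fun i => i) (Nat.zero_le m) hle
    rw [prod_Ioc_zero_id, prod_Ioc_zero_id] at h
    rw [← Nat.cast_prod]; exact_mod_cast h
  have hfac : (m.factorial : ℚ) ≠ 0 := by exact_mod_cast m.factorial_ne_zero
  have hcb : (Nat.centralBinom m : ℚ) * m.factorial * m.factorial = ((2 * m).factorial : ℚ) := by
    have := Nat.choose_mul_factorial_mul_factorial hle
    rw [show 2 * m - m = m from by omega] at this
    exact_mod_cast congrArg (Nat.cast : ℕ → ℚ) this
  rw [h1, div_eq_iff hfac]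
  have key : (m.factorial : ℚ) * ∏ i ∈ Finset.Ioc m (2 * m), (i : ℚ)
      = (m.factorial : ℚ) * ((Nat.centralBinom m : ℚ) * m.factorial) := by
    rw [h2, ← hcb]; ring
  have := mul_left_cancel₀ hfac key
  linarith [this]

theorem typeD_product_formula (n : ℕ) (hn : 2 ≤ n) :
    ((2 * (n : ℚ) - 2 + (n : ℚ)) / (n : ℚ)) *
        ∏ i ∈ Finset.Icc 1 (n - 1), ((2 * (n : ℚ) - 2 + 2 * (i : ℚ)) / (2 * (i : ℚ)))
      = (Nat.choose (2 * n) n : ℚ) - (Nat.choose (2 * n - 2) (n - 1) : ℚ) := by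
  obtain ⟨m, rfl⟩ : ∃ m, n = m + 1 := ⟨n - 1, by omega⟩
  have hm : 1 ≤ m := by omega
  have hprod : (∏ i ∈ Finset.Icc 1 ((m + 1) - 1),
      ((2 * ((m + 1 : ℕ) : ℚ) - 2 + 2 * (i : ℚ)) / (2 * (i : ℚ))))
      = (Nat.centralBinom m : ℚ) := by
    rw [← prod_ratio_eq_centralBinom]
    apply Finset.prod_congr (by simp)
    intro i hi
    simp only [Finset.mem_Icc] at hi
    have hi0 : (i : ℚ) ≠ 0 := by exact_mod_cast (by omega : i ≠ 0)
    push_cast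
    field_simp
    ring
  rw [hprod]
  have h1 : 2 * (m + 1) - 2 = 2 * m := by omega
  have h2 : (m + 1) - 1 = m := by omega
  rw [h1, h2]
  have hkey : ((m : ℚ) + 1) * Nat.centralBinom (m + 1) = 2 * (2 * m + 1) * Nat.centralBinom m := by
    exact_mod_cast congrArg (Nat.cast : ℕ → ℚ) (Nat.succ_mul_centralBinom_succ m)
  have hchoose1 : (Nat.choose (2 * (m + 1)) (m + 1) : ℚ) = Nat.centralBinom (m + 1) := by
    rw [Nat.centralBinom]
  have hchoose2 : (Nat.choose (2 * m) m : ℚ) = Nat.centralBinom m := by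
    rw [Nat.centralBinom]
  rw [hchoose1, hchoose2]
  have hn0 : ((m : ℚ) + 1) ≠ 0 := by positivity
  push_cast
  field_simp
  nlinarith [hkey]
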